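/- In any extra-special 2-group Q of width l ≥ 2 (|Q| = 2^{2l+1}), every cyclic subgroup of order 4 is contained in a subgroup of Q isomorphic to the quaternion group Q₈. -/

import Mathlib

open Subgroup
open scoped commutatorElement

/-- In a group of cardinality 2, any two nontrivial elements are equal. -/
private lemma card_two_eq_aux {G : Type*} [Group G] (h : Nat.card G = 2)
    {u v : G} (hu : u ≠ 1) (hv : v ≠ 1) : u = v := by
  have hfin : Finite G := Nat.finite_of_card_ne_zero (by omega)
  have hu2 : u ^ 2 = 1 := by rw [← h]; exact pow_card_eq_one'
  have htop : Subgroup.zpowers u = ⊤ := by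
    apply Subgroup.eq_top_of_card_eq
    rw [Nat.card_zpowers, h]
    have hdvd : orderOf u ∣ 2 := orderOf_dvd_of_pow_eq_one hu2
    have hne : orderOf u ≠ 1 := by simpa [orderOf_eq_one_iff] using hu
    rcases (Nat.dvd_prime Nat.prime_two).mp hdvd with h1 | h1
    · exact absurd h1 hne
    · exact h1
  obtain ⟨k, hk⟩ : v ∈ Subgroup.zpowers u := htop ▸ Subgroup.mem_top v
  change u ^ k = v at hk
  have hu2' : u ^ (2 : ℤ) = 1 := by
    rw [← zpow_natCast] at hu2; exact_mod_cast hu2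
  have hdecomp : u ^ k = u ^ (k % 2) := by
    conv_lhs => rw [show k = 2 * (k / 2) + k % 2 by omega]
    rw [zpow_add, zpow_mul, hu2', one_zpow, one_mul]
  rcases (show k % 2 = 0 ∨ k % 2 = 1 by omega) with h0 | h1
  · exfalso; apply hv; rw [← hk, hdecomp, h0, zpow_zero]
  · rw [← hk, hdecomp, h1, zpow_one]

/-- When all commutators are central, `g ↦ ⁅t, g⁆` is a homomorphism. -/
private def commHom {Q : Type*} [Group Q]
    (hcc : ∀ a b : Q, ⁅a, b⁆ ∈ Subgroup.center Q) (t : Q) : Q →* Q :=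
  MonoidHom.mk' (fun g => ⁅t, g⁆) (by
    intro a b
    show ⁅t, a * b⁆ = ⁅t, a⁆ * ⁅t, b⁆
    have key : ⁅t, a * b⁆ = ⁅t, a⁆ * (a * ⁅t, b⁆ * a⁻¹) := by
      simp only [commutatorElement_def]; group
    have hcen : a * ⁅t, b⁆ = ⁅t, b⁆ * a := Subgroup.mem_center_iff.mp (hcc t b) a
    rw [key, hcen, mul_inv_cancel_right])

private lemma commHom_apply {Q : Type*} [Group Q]
    (hcc : ∀ a b : Q, ⁅a, b⁆ ∈ Subgroup.center Q) (t g : Q) :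
    commHom hcc t g = ⁅t, g⁆ := rfl

/-- Construction of a Q₈ subgroup from suitable generators. -/
private lemma quat_construct {Q : Type*} [Group Q] {x y : Q}
    (hx : orderOf x = 4) (hy2 : y ^ 2 = x ^ 2) (hxy : x * y = y * x⁻¹)
    (hyx : ¬ y * x = x * y) :
    ∃ H : Subgroup Q, x ∈ H ∧ Nonempty (H ≃* QuaternionGroup 2) := by
  haveI : NeZero (2 * 2) := ⟨by norm_num⟩
  haveI : Fact (1 < 2 * 2) := ⟨by norm_num⟩
  set X : ZMod (2 * 2) → Q := fun i => x ^ i.val with hX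
  have hXadd : ∀ i j : ZMod (2 * 2), X (i + j) = X i * X j := by
    intro i j
    show x ^ (i + j).val = x ^ i.val * x ^ j.val
    rw [← pow_add, pow_eq_pow_iff_modEq, hx, ZMod.val_add]
    exact Nat.mod_modEq _ 4
  have hXsub : ∀ i j : ZMod (2 * 2), (X i)⁻¹ * X j = X (j - i) := by
    intro i j
    have h := hXadd i (j - i)
    have h2 : i + (j - i) = j := by ring
    rw [h2] at h
    rw [h]; group
  have hpowy : ∀ n : ℕ, x ^ n * y = y * (x ^ n)⁻¹ := by
    intro n
    induction n with
    | zero => simp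
    | succ n ih =>
        calc x ^ (n + 1) * y = x ^ n * (x * y) := by rw [pow_succ, mul_assoc]
        _ = x ^ n * y * x⁻¹ := by rw [hxy, mul_assoc]
        _ = y * (x ^ n)⁻¹ * x⁻¹ := by rw [ih]
        _ = y * ((x ^ n)⁻¹ * x⁻¹) := by rw [mul_assoc]
        _ = y * (x ^ (n + 1))⁻¹ := by rw [← mul_inv_rev, ← pow_succ']
  have hXy : ∀ i : ZMod (2 * 2), X i * y = y * (X i)⁻¹ := fun i => hpowy i.val
  have hX2 : X 2 = x ^ 2 := by
    show x ^ (2 : ZMod (2 * 2)).val = x ^ 2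
    congr 1
  let f : QuaternionGroup 2 →* Q := MonoidHom.mk'
    (fun g => match g with
      | .a i => X i
      | .xa i => y * X i)
    (by
      rintro (i | i) (j | j)
      · show X (i + j) = X i * X j
        exact hXadd i j
      · show y * X (j - i) = X i * (y * X j)
        rw [← mul_assoc, hXy i, mul_assoc, hXsub]
      · show y * X (i + j) = y * X i * X j
        rw [hXadd, mul_assoc]
      · show X ((2 : ℕ) + j - i) = y * X i * (y * X j)
        have e : y * X i * (y * X j) = y * (X i * y) * X j := by group
        have hyy : y * y = X 2 := by rw [hX2, ← hy2]; exact (sq y).symm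
        rw [e, hXy i,
          show y * (y * (X i)⁻¹) * X j = y * y * ((X i)⁻¹ * X j) by group,
          hXsub, hyy, ← hXadd]
        congr 1
        push_cast
        ring)
  have hfa : ∀ i : ZMod (2 * 2), f (QuaternionGroup.a i) = X i := fun _ => rfl
  have hfxa : ∀ i : ZMod (2 * 2), f (QuaternionGroup.xa i) = y * X i := fun _ => rfl
  have hinj : Function.Injective f := by
    rw [injective_iff_map_eq_one]
    rintro (i | i) h
    · rw [hfa] at h
      have hdvd : 4 ∣ i.val := hx ▸ orderOf_dvd_of_pow_eq_one h
      have hlt : i.val < 2 * 2 := ZMod.val_lt i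
      have hv0 : i.val = 0 := by omega
      rw [QuaternionGroup.one_def]
      congr 1
      exact (ZMod.val_eq_zero i).mp hv0
    · exfalso
      rw [hfxa] at h
      have hyv : y = (x ^ i.val)⁻¹ := eq_inv_of_mul_eq_one_left h
      apply hyx
      rw [hyv]
      group
  refine ⟨f.range, ⟨QuaternionGroup.a 1, ?_⟩, ⟨(MonoidHom.ofInjective hinj).symm⟩⟩
  rw [hfa]
  show x ^ (1 : ZMod (2 * 2)).val = x
  rw [ZMod.val_one, pow_one]

/-- In any extra-special 2-group `Q` of width `l ≥ 2` (i.e. `|Q| = 2^(2l+1)`,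
`Z(Q) = Q'` of order 2, squares central), every cyclic subgroup of order 4 is
contained in a subgroup of `Q` isomorphic to the quaternion group `Q₈`. -/
theorem stmt_18 {Q : Type*} [Group Q] [Finite Q] (l : ℕ) (hl : 2 ≤ l)
    (hcard : Nat.card Q = 2 ^ (2 * l + 1))
    (hcomm : commutator Q = Subgroup.center Q)
    (hZ : Nat.card (Subgroup.center Q) = 2)
    (hsq : ∀ x : Q, x ^ 2 ∈ Subgroup.center Q) :
    ∀ x : Q, orderOf x = 4 →
      ∃ H : Subgroup Q, x ∈ H ∧ Nonempty (H ≃* QuaternionGroup 2) := by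
  intro x hx
  have hcc : ∀ a b : Q, ⁅a, b⁆ ∈ Subgroup.center Q := fun a b => by
    rw [← hcomm]
    exact commutator_mem_commutator (Subgroup.mem_top a) (Subgroup.mem_top b)
  have hx4 : x ^ 4 = 1 := hx ▸ pow_orderOf_eq_one x
  have hx2ne : x ^ 2 ≠ 1 := by
    intro h
    have := orderOf_dvd_of_pow_eq_one h
    rw [hx] at this
    omega
  have hx2mem : x ^ 2 ∈ Subgroup.center Q := hsq x
  -- every central element is 1 or x^2
  have hzcen : ∀ c ∈ Subgroup.center Q, c = 1 ∨ c = x ^ 2 := by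
    intro c hc
    by_cases h1 : c = 1
    · exact Or.inl h1
    · right
      have hkey : (⟨c, hc⟩ : Subgroup.center Q) = ⟨x ^ 2, hx2mem⟩ :=
        card_two_eq_aux hZ (fun h => h1 (by simpa using congrArg Subtype.val h))
          (fun h => hx2ne (by simpa using congrArg Subtype.val h))
      simpa using congrArg Subtype.val hkey
  have hcomm_val : ∀ g : Q, ¬ g * x = x * g → ⁅g, x⁆ = x ^ 2 := by
    intro g hg
    rcases hzcen _ (hcc g x) with h | h
    · exact absurd (commutatorElement_eq_one_iff_mul_comm.mp h) hg
    · exact h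
  by_cases hP : ∃ y : Q, ¬ y * x = x * y ∧ y ^ 2 = x ^ 2
  · -- main case : construct Q₈
    obtain ⟨y, hyx, hy2⟩ := hP
    have hyx' : ¬ y⁻¹ * x = x * y⁻¹ := by
      intro h
      apply hyx
      have := congrArg (fun g => y * g * y) h
      simpa [mul_assoc] using this.symm
    have h2 := hcomm_val y⁻¹ hyx'
    have hrel : y⁻¹ * x * y = x⁻¹ := by
      have e1 : y⁻¹ * x * y * x⁻¹ = x ^ 2 := by
        simpa [commutatorElement_def] using h2
      have e2 : y⁻¹ * x * y = x ^ 2 * x := by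
        calc y⁻¹ * x * y = y⁻¹ * x * y * x⁻¹ * x := by group
        _ = x ^ 2 * x := by rw [e1]
      rw [e2]
      refine eq_inv_of_mul_eq_one_left ?_
      calc x ^ 2 * x * x = x ^ 4 := by group
      _ = 1 := hx4
    have hxy : x * y = y * x⁻¹ := by
      calc x * y = y * (y⁻¹ * x * y) := by group
      _ = y * x⁻¹ := by rw [hrel]
    exact quat_construct hx hy2 hxy hyx
  · -- contradiction case: the centralizer of x would be too small
    exfalso
    push_neg at hP
    set ψ : Q →* Q := commHom hcc x with hψ
    set C : Subgroup Q := ψ.ker with hCdef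
    have hmemC : ∀ g : Q, g ∈ C ↔ x * g = g * x := by
      intro g
      rw [hCdef, MonoidHom.mem_ker, hψ, commHom_apply]
      exact commutatorElement_eq_one_iff_mul_comm
    have hsq1 : ∀ g : Q, g ∉ C → g ^ 2 = 1 := by
      intro g hg
      have hgx : ¬ g * x = x * g := fun h => hg ((hmemC g).mpr h.symm)
      rcases hzcen _ (hsq g) with h | h
      · exact h
      · exact absurd h (hP g hgx)
    obtain ⟨t, ht⟩ : ∃ t : Q, t ∉ C := by
      by_contra hall
      push_neg at hall
      have hxc : x ∈ Subgroup.center Q := by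
        rw [Subgroup.mem_center_iff]
        intro g
        exact ((hmemC g).mp (hall g)).symm
      have hpow : (⟨x, hxc⟩ : Subgroup.center Q) ^ 2 = 1 := by
        rw [← hZ]; exact pow_card_eq_one'
      exact hx2ne (by simpa using congrArg Subtype.val hpow)
    have ht2 : t * t = 1 := by have := hsq1 t ht; rwa [sq] at this
    have hti : t⁻¹ = t := inv_eq_of_mul_eq_one_right ht2
    have hinvmap : ∀ a ∈ C, t * a * t⁻¹ = a⁻¹ := by
      intro a ha
      have hta : t * a ∉ C := by
        intro hmem
        apply ht
        have h' : (t * a) * a⁻¹ ∈ C := mul_mem hmem (inv_mem ha)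
        simpa [mul_assoc] using h'
      have h1 : t * a * (t * a) = 1 := by have := hsq1 _ hta; rwa [sq] at this
      rw [hti]
      exact eq_inv_of_mul_eq_one_left (by rw [mul_assoc]; exact h1)
    have hab : ∀ a ∈ C, ∀ b ∈ C, a * b = b * a := by
      intro a ha b hb
      have e1 : t * (a * b) * t⁻¹ = (a * b)⁻¹ := hinvmap _ (mul_mem ha hb)
      have e2 : t * (a * b) * t⁻¹ = a⁻¹ * b⁻¹ := by
        rw [show t * (a * b) * t⁻¹ = (t * a * t⁻¹) * (t * b * t⁻¹) by group,
          hinvmap a ha, hinvmap b hb]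
      have e3 : (a * b)⁻¹ = a⁻¹ * b⁻¹ := e1.symm.trans e2
      calc a * b = ((a * b)⁻¹)⁻¹ := by rw [inv_inv]
      _ = (a⁻¹ * b⁻¹)⁻¹ := by rw [e3]
      _ = b * a := by rw [mul_inv_rev, inv_inv, inv_inv]
    have hψval : ∀ g : Q, g ∉ C → ψ g = x ^ 2 := by
      intro g hg
      rcases hzcen _ (hcc x g) with h | h
      · exact absurd ((hmemC g).mpr (commutatorElement_eq_one_iff_mul_comm.mp h)) hg
      · exact h
    set φ : C →* Q := (commHom hcc t).comp C.subtype with hφ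
    have hker_cen : ∀ c : φ.ker, ((c : C) : Q) ∈ Subgroup.center Q := by
      intro c
      have hc1 : φ (c : C) = 1 := c.2
      have hct : t * ((c : C) : Q) = ((c : C) : Q) * t :=
        commutatorElement_eq_one_iff_mul_comm.mp hc1
      rw [Subgroup.mem_center_iff]
      intro g
      by_cases hg : g ∈ C
      · exact hab g hg _ (c : C).2
      · have hgi : t⁻¹ * g ∈ C := by
          rw [hCdef, MonoidHom.mem_ker, map_mul, map_inv, hψval g hg, hψval t ht]
          group
        have h1 : (t⁻¹ * g) * ((c : C) : Q) = ((c : C) : Q) * (t⁻¹ * g) :=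
          hab _ hgi _ (c : C).2
        calc g * ((c : C) : Q) = t * ((t⁻¹ * g) * ((c : C) : Q)) := by group
        _ = t * (((c : C) : Q) * (t⁻¹ * g)) := by rw [h1]
        _ = (t * ((c : C) : Q)) * (t⁻¹ * g) := by group
        _ = (((c : C) : Q) * t) * (t⁻¹ * g) := by rw [hct]
        _ = ((c : C) : Q) * g := by group
    have hψrange : ψ.range ≤ Subgroup.center Q := by
      rintro _ ⟨g, rfl⟩
      exact hcc x g
    have hcr1 : Nat.card ψ.range ≤ 2 := hZ ▸ Subgroup.card_le_of_le hψrange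
    have hq1 : Nat.card Q = Nat.card ψ.range * Nat.card C := by
      rw [Subgroup.card_eq_card_quotient_mul_card_subgroup C]
      congr 1
      exact Nat.card_congr (QuotientGroup.quotientKerEquivRange ψ).toEquiv
    have hφrange : φ.range ≤ Subgroup.center Q := by
      rintro _ ⟨c, rfl⟩
      exact hcc t _
    have hcr2 : Nat.card φ.range ≤ 2 := hZ ▸ Subgroup.card_le_of_le hφrange
    have hkerinj : Function.Injective
        (fun c : φ.ker => (⟨((c : C) : Q), hker_cen c⟩ : Subgroup.center Q)) := by
      intro a b h
      simp only [Subtype.mk.injEq] at h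
      exact Subtype.ext (Subtype.ext h)
    have hcr3 : Nat.card φ.ker ≤ 2 :=
      hZ ▸ Nat.card_le_card_of_injective _ hkerinj
    have hq2 : Nat.card C = Nat.card φ.range * Nat.card φ.ker := by
      rw [Subgroup.card_eq_card_quotient_mul_card_subgroup φ.ker]
      congr 1
      exact Nat.card_congr (QuotientGroup.quotientKerEquivRange φ).toEquiv
    have hbig : 2 ^ (2 * l + 1) ≤ 8 := by
      rw [← hcard, hq1, hq2]
      calc Nat.card ψ.range * (Nat.card φ.range * Nat.card φ.ker)
          ≤ 2 * (2 * 2) := Nat.mul_le_mul hcr1 (Nat.mul_le_mul hcr2 hcr3)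
      _ = 8 := by norm_num
    have hlow : 2 ^ 5 ≤ 2 ^ (2 * l + 1) := Nat.pow_le_pow_right (by norm_num) (by omega)
    omega
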